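/- arXiv:2004.03219 — 3 statements merged into one kernel-verified Lean document; each statement's English description precedes it below -/
import Mathlib

section
/- Main theorem of the penalty method (limit point satisfies the constraint): Suppose X is a topological space, F : X → ℝ and P : X → ℝ are continuous, F(Φ) ≥ 0 and P(Φ) ≥ 0 for all Φ ∈ X, (λ_k)_{k∈ℕ} is a strictly increasing sequence of positive reals with λ_k → ∞, for each k the element Ψ_k is a minimizer of F_P(·, λ_k), the sequence (Ψ_k) converges in X to an element Ψ̄, and there exists a constrained minimizer Ψ* of F. Then P(Ψ̄) = 0. -/
open Filter Topology

/-- Main theorem of the penalty method (limit point satisfies the constraint):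
with `F, P : X → ℝ` continuous and nonnegative on a topological space `X`,
`(λ_k)` strictly increasing, positive, tending to infinity, each `Ψ_k` a
minimizer of `F + λ_k • P`, `Ψ_k → Ψ̄`, and a constrained minimizer of `F`
existing, the limit satisfies `P Ψ̄ = 0`. -/
theorem limit_satisfies_constraint {X : Type*} [TopologicalSpace X] (F P : X → ℝ)
    (hFc : Continuous F) (hPc : Continuous P)
    (hF : ∀ Φ : X, 0 ≤ F Φ) (hP : ∀ Φ : X, 0 ≤ P Φ)
    (lam : ℕ → ℝ) (hlampos : ∀ k, 0 < lam k) (hlammono : StrictMono lam)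
    (hlamtop : Tendsto lam atTop atTop)
    (Ψ : ℕ → X)
    (hΨ : ∀ k, ∀ Φ : X, F (Ψ k) + lam k * P (Ψ k) ≤ F Φ + lam k * P Φ)
    (Ψbar : X) (hconv : Tendsto Ψ atTop (𝓝 Ψbar))
    (hexists : ∃ Ψs : X, P Ψs = 0 ∧ ∀ Φ : X, P Φ = 0 → F Ψs ≤ F Φ) :
    P Ψbar = 0 := by
  obtain ⟨Ψs, hPs, hFs⟩ := hexists
  -- P (Ψ k) ≤ F Ψs / lam k
  have key : ∀ k, P (Ψ k) ≤ F Ψs / lam k := by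
    intro k
    have h := hΨ k Ψs
    rw [hPs, mul_zero, add_zero] at h
    have h2 : lam k * P (Ψ k) ≤ F Ψs := le_trans (le_add_of_nonneg_left (hF _)) h
    rw [le_div_iff₀ (hlampos k), mul_comm]
    exact h2
  have hto0 : Tendsto (fun k => P (Ψ k)) atTop (𝓝 0) := by
    have hupper : Tendsto (fun k => F Ψs / lam k) atTop (𝓝 0) :=
      Tendsto.div_atTop tendsto_const_nhds hlamtop
    exact squeeze_zero (fun k => hP _) key hupper
  have hto : Tendsto (fun k => P (Ψ k)) atTop (𝓝 (P Ψbar)) :=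
    (hPc.tendsto Ψbar).comp hconv
  exact tendsto_nhds_unique hto hto0
end

section
/- Main theorem of the penalty method (limit point is a constrained minimizer): Suppose X is a topological space, F : X → ℝ and P : X → ℝ are continuous, F(Φ) ≥ 0 and P(Φ) ≥ 0 for all Φ ∈ X, (λ_k)_{k∈ℕ} is a strictly increasing sequence of positive reals with λ_k → ∞, for each k the element Ψ_k is a minimizer of F_P(·, λ_k), the sequence (Ψ_k) converges in X to an element Ψ̄, and there exists a constrained minimizer Ψ* of F. Then F(Ψ̄) = F(Ψ*); in particular Ψ̄ is itself a constrained minimizer of F. -/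
open Filter Topology

/-- Main theorem of the penalty method (limit point is a constrained minimizer):
with `F, P : X → ℝ` continuous and nonnegative on a topological space `X`,
`(λ_k)` strictly increasing, positive, tending to infinity, each `Ψ_k` a
minimizer of `F + λ_k • P`, `Ψ_k → Ψ̄`, and `Ψ*` a constrained minimizer of `F`,
the limit satisfies `F Ψ̄ = F Ψ*`; in particular `Ψ̄` is itself a constrained
minimizer of `F`. -/
theorem limit_is_constrained_minimizer {X : Type*} [TopologicalSpace X] (F P : X → ℝ)
    (hFc : Continuous F) (hPc : Continuous P)
    (hF : ∀ Φ : X, 0 ≤ F Φ) (hP : ∀ Φ : X, 0 ≤ P Φ)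
    (lam : ℕ → ℝ) (hlampos : ∀ k, 0 < lam k) (hlammono : StrictMono lam)
    (hlamtop : Tendsto lam atTop atTop)
    (Ψ : ℕ → X)
    (hΨ : ∀ k, ∀ Φ : X, F (Ψ k) + lam k * P (Ψ k) ≤ F Φ + lam k * P Φ)
    (Ψbar : X) (hconv : Tendsto Ψ atTop (𝓝 Ψbar))
    (Ψs : X) (hPΨs : P Ψs = 0) (hΨs : ∀ Φ : X, P Φ = 0 → F Ψs ≤ F Φ) :
    F Ψbar = F Ψs ∧ (P Ψbar = 0 ∧ ∀ Φ : X, P Φ = 0 → F Ψbar ≤ F Φ) := by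
  have hkey : ∀ k, F (Ψ k) + lam k * P (Ψ k) ≤ F Ψs := by
    intro k
    have := hΨ k Ψs
    simpa [hPΨs] using this
  have hFle : ∀ k, F (Ψ k) ≤ F Ψs := by
    intro k
    have h1 : 0 ≤ lam k * P (Ψ k) := mul_nonneg (hlampos k).le (hP _)
    linarith [hkey k]
  have hPle : ∀ k, P (Ψ k) ≤ F Ψs / lam k := by
    intro k
    rw [le_div_iff₀ (hlampos k)]
    have := hF (Ψ k)
    linarith [hkey k, mul_comm (P (Ψ k)) (lam k)]
  have hdiv : Tendsto (fun k => F Ψs / lam k) atTop (𝓝 0) :=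
    Tendsto.div_atTop tendsto_const_nhds hlamtop
  have hPtend : Tendsto (fun k => P (Ψ k)) atTop (𝓝 0) :=
    tendsto_of_tendsto_of_tendsto_of_le_of_le tendsto_const_nhds hdiv
      (fun k => hP (Ψ k)) (fun k => hPle k)
  have hPtend' : Tendsto (fun k => P (Ψ k)) atTop (𝓝 (P Ψbar)) :=
    (hPc.tendsto Ψbar).comp hconv
  have hPbar : P Ψbar = 0 := tendsto_nhds_unique hPtend' hPtend
  have hFtend : Tendsto (fun k => F (Ψ k)) atTop (𝓝 (F Ψbar)) :=
    (hFc.tendsto Ψbar).comp hconv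
  have hle : F Ψbar ≤ F Ψs := le_of_tendsto hFtend (Eventually.of_forall hFle)
  have hge : F Ψs ≤ F Ψbar := hΨs Ψbar hPbar
  exact ⟨le_antisymm hle hge, hPbar, fun Φ hΦ => (le_antisymm hle hge) ▸ hΨs Φ hΦ⟩
end

section
/- Convergence of objective values to the constrained optimum: Suppose X is a topological space, F : X → ℝ and P : X → ℝ are continuous, F(Φ) ≥ 0 and P(Φ) ≥ 0 for all Φ ∈ X, (λ_k)_{k∈ℕ} is a strictly increasing sequence of positive reals with λ_k → ∞, for each k the element Ψ_k is a minimizer of F_P(·, λ_k), the sequence (Ψ_k) converges in X, and there exists a constrained minimizer Ψ* of F. Then F(Ψ_k) → F(Ψ*) as k → ∞. -/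
open Filter Topology

/-- Convergence of objective values to the constrained optimum: with
`F, P : X → ℝ` continuous and nonnegative, `(λ_k)` strictly increasing,
positive, tending to infinity, each `Ψ_k` a minimizer of `F + λ_k • P`, the
sequence `(Ψ_k)` converging in `X`, and `Ψ*` a constrained minimizer of `F`,
one has `F (Ψ_k) → F Ψ*`. -/
theorem objective_tendsto_constrained_optimum {X : Type*} [TopologicalSpace X]
    (F P : X → ℝ)
    (hFc : Continuous F) (hPc : Continuous P)
    (hF : ∀ Φ : X, 0 ≤ F Φ) (hP : ∀ Φ : X, 0 ≤ P Φ)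
    (lam : ℕ → ℝ) (hlampos : ∀ k, 0 < lam k) (hlammono : StrictMono lam)
    (hlamtop : Tendsto lam atTop atTop)
    (Ψ : ℕ → X)
    (hΨ : ∀ k, ∀ Φ : X, F (Ψ k) + lam k * P (Ψ k) ≤ F Φ + lam k * P Φ)
    (hconv : ∃ Ψbar : X, Tendsto Ψ atTop (𝓝 Ψbar))
    (Ψs : X) (hPΨs : P Ψs = 0) (hΨs : ∀ Φ : X, P Φ = 0 → F Ψs ≤ F Φ) :
    Tendsto (fun k => F (Ψ k)) atTop (𝓝 (F Ψs)) := by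
  obtain ⟨Ψbar, hb⟩ := hconv
  have h1 : ∀ k, F (Ψ k) + lam k * P (Ψ k) ≤ F Ψs := by
    intro k; simpa [hPΨs] using hΨ k Ψs
  have hFle : ∀ k, F (Ψ k) ≤ F Ψs := fun k =>
    le_trans (le_add_of_nonneg_right (mul_nonneg (hlampos k).le (hP _))) (h1 k)
  have hPk : ∀ k, P (Ψ k) ≤ F Ψs / lam k := by
    intro k
    rw [le_div_iff₀ (hlampos k)]
    nlinarith [h1 k, hF (Ψ k)]
  have hdiv : Tendsto (fun k => F Ψs / lam k) atTop (𝓝 0) :=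
    Tendsto.div_atTop tendsto_const_nhds hlamtop
  have hPlim : Tendsto (fun k => P (Ψ k)) atTop (𝓝 0) :=
    tendsto_of_tendsto_of_tendsto_of_le_of_le tendsto_const_nhds hdiv
      (fun k => hP _) hPk
  have hPbar : P Ψbar = 0 :=
    tendsto_nhds_unique ((hPc.tendsto Ψbar).comp hb) hPlim
  have hFlim : Tendsto (fun k => F (Ψ k)) atTop (𝓝 (F Ψbar)) :=
    (hFc.tendsto Ψbar).comp hb
  have heq : F Ψbar = F Ψs :=
    le_antisymm (le_of_tendsto hFlim (Eventually.of_forall hFle)) (hΨs Ψbar hPbar)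
  rwa [heq] at hFlim
end
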